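/- If an action-type formula u holds in (V, H) for every finitely generated subgroup H of G, then u holds in (V, G). (Key step: any valuation μ = (α, β) into (V,G) can be modified outside the finite Y-support of u to a valuation μ' whose group component has finitely generated image, without changing satisfaction of u.) -/

import Mathlib

/-- Action-type first-order formulas over the free representation
`W = (X·K[F(Y)], F(Y))`: atoms are action equalities `w ≡ 0` with
`w` in the free `K[F(Y)]`-module on `X`, and the only quantifiers are
`∃x` over module variables `x ∈ X`. -/
inductive AFormula (K X Y : Type) [CommRing K] : Type
  | eq : (X →₀ MonoidAlgebra K (FreeGroup Y)) → AFormula K X Y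
  | or : AFormula K X Y → AFormula K X Y → AFormula K X Y
  | and : AFormula K X Y → AFormula K X Y → AFormula K X Y
  | not : AFormula K X Y → AFormula K X Y
  | ex : X → AFormula K X Y → AFormula K X Y

variable {K X Y G V : Type} [CommRing K] [Group G] [AddCommGroup V] [Module K V]

/-- Value of an element `w = Σ xᵢ·uᵢ` of the free `K[F(Y)]`-module under an
assignment `α : X → V` of module variables and `β : Y → G` of group variables,
in the representation `ρ`. -/
noncomputable def evalW (ρ : Representation K G V) (α : X → V) (β : Y → G)
    (w : X →₀ MonoidAlgebra K (FreeGroup Y)) : V :=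
  w.sum fun x u => Representation.asAlgebraHom (ρ.comp (FreeGroup.lift β)) u (α x)

/-- Satisfaction of an action-type formula in a representation `ρ` under a
valuation `(α, β)`. -/
def SatA [DecidableEq X] (ρ : Representation K G V) (α : X → V) (β : Y → G) :
    AFormula K X Y → Prop
  | .eq w => evalW ρ α β w = 0
  | .or u v => SatA ρ α β u ∨ SatA ρ α β v
  | .and u v => SatA ρ α β u ∧ SatA ρ α β v
  | .not u => ¬ SatA ρ α β u
  | .ex x u => ∃ a : V, SatA ρ (Function.update α x a) β u

/-- An action-type formula holds in a representation if it is satisfied by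
every valuation. -/
def HoldsA [DecidableEq X] (ρ : Representation K G V) (u : AFormula K X Y) : Prop :=
  ∀ (α : X → V) (β : Y → G), SatA ρ α β u

/-- The kernel of the action of `G` on `V`. -/
noncomputable def actionKer (ρ : Representation K G V) : Subgroup G :=
  ρ.asGroupHom.ker

instance (ρ : Representation K G V) : (actionKer ρ).Normal :=
  MonoidHom.normal_ker _

/-- The faithful representation `(V, G/N)` associated to `(V, G)`, where `N` is
the kernel of the action. -/
noncomputable def faithfulQuot (ρ : Representation K G V) :
    Representation K (G ⧸ actionKer ρ) V :=
  (Units.coeHom (V →ₗ[K] V)).comp (QuotientGroup.kerLift ρ.asGroupHom)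

section Aux

variable {K X Y G V : Type} [CommRing K] [Group G] [AddCommGroup V] [Module K V]

/-- Letters occurring in a free group element. -/
def fgLetters [DecidableEq Y] (g : FreeGroup Y) : Finset Y :=
  (g.toWord.map Prod.fst).toFinset

theorem FreeGroup.lift_congr_on [DecidableEq Y] {β β' : Y → G} (g : FreeGroup Y)
    (hb : ∀ y ∈ fgLetters g, β y = β' y) :
    FreeGroup.lift β g = FreeGroup.lift β' g := by
  conv_lhs => rw [← FreeGroup.mk_toWord (x := g)]
  conv_rhs => rw [← FreeGroup.mk_toWord (x := g)]
  rw [FreeGroup.lift_mk, FreeGroup.lift_mk]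
  congr 1
  refine List.map_congr_left fun p hp => ?_
  have : p.1 ∈ fgLetters g :=
    List.mem_toFinset.mpr (List.mem_map.mpr ⟨p, hp, rfl⟩)
  rw [hb _ this]

/-- Letters occurring in an element of the free module. -/
noncomputable def wLetters [DecidableEq Y] (w : X →₀ MonoidAlgebra K (FreeGroup Y)) : Finset Y :=
  w.support.biUnion fun x => (w x).coeff.support.biUnion fgLetters

/-- Group variables occurring in a formula. -/
noncomputable def aVars [DecidableEq Y] : AFormula K X Y → Finset Y
  | .eq w => wLetters w
  | .or u v => aVars u ∪ aVars v
  | .and u v => aVars u ∪ aVars v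
  | .not u => aVars u
  | .ex _ u => aVars u

theorem evalW_congr_on [DecidableEq Y] (ρ : Representation K G V) (α : X → V)
    {β β' : Y → G} (w : X →₀ MonoidAlgebra K (FreeGroup Y))
    (hb : ∀ y ∈ wLetters (K := K) w, β y = β' y) :
    evalW ρ α β w = evalW ρ α β' w := by
  unfold evalW
  refine Finsupp.sum_congr fun x hx => ?_
  rw [Representation.asAlgebraHom_def, Representation.asAlgebraHom_def,
    MonoidAlgebra.lift_apply, MonoidAlgebra.lift_apply]
  congr 1
  refine Finsupp.sum_congr fun g hg => ?_
  simp only [MonoidHom.comp_apply]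
  have hg' : FreeGroup.lift β g = FreeGroup.lift β' g := by
    refine FreeGroup.lift_congr_on g fun y hy => hb y ?_
    simp only [wLetters, Finset.mem_biUnion]
    exact ⟨x, hx, g, hg, hy⟩
  rw [hg']

theorem satA_congr_on [DecidableEq X] [DecidableEq Y] (ρ : Representation K G V)
    {β β' : Y → G} (u : AFormula K X Y)
    (hb : ∀ y ∈ aVars u, β y = β' y) (α : X → V) :
    SatA ρ α β u ↔ SatA ρ α β' u := by
  induction u generalizing α with
  | eq w => simp only [SatA]; rw [evalW_congr_on ρ α w hb]
  | or u v ihu ihv =>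
      simp only [SatA]
      rw [ihu (fun y hy => hb y (Finset.mem_union_left _ hy)) α,
        ihv (fun y hy => hb y (Finset.mem_union_right _ hy)) α]
  | and u v ihu ihv =>
      simp only [SatA]
      rw [ihu (fun y hy => hb y (Finset.mem_union_left _ hy)) α,
        ihv (fun y hy => hb y (Finset.mem_union_right _ hy)) α]
  | not u ihu => simp only [SatA]; rw [ihu hb α]
  | ex x u ihu =>
      simp only [SatA]
      exact exists_congr fun a => ihu hb _

theorem satA_congr_rep [DecidableEq X] {G₁ G₂ : Type} [Group G₁] [Group G₂]
    (ρ₁ : Representation K G₁ V) (ρ₂ : Representation K G₂ V)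
    (β₁ : Y → G₁) (β₂ : Y → G₂)
    (hβ : ρ₁.comp (FreeGroup.lift β₁) = ρ₂.comp (FreeGroup.lift β₂))
    (u : AFormula K X Y) (α : X → V) :
    SatA ρ₁ α β₁ u ↔ SatA ρ₂ α β₂ u := by
  induction u generalizing α with
  | eq w =>
      simp only [SatA]
      unfold evalW
      rw [hβ]
  | or u v ihu ihv => simp only [SatA]; rw [ihu α, ihv α]
  | and u v ihu ihv => simp only [SatA]; rw [ihu α, ihv α]
  | not u ihu => simp only [SatA]; rw [ihu α]
  | ex x u ihu => simp only [SatA]; exact exists_congr fun a => ihu _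

end Aux

/-- If an action-type formula `u` holds in `(V, H)` for every finitely
generated subgroup `H ≤ G`, then `u` holds in `(V, G)`. -/
theorem holds_of_holds_on_fg_subgroups [DecidableEq X] [DecidableEq Y]
    (ρ : Representation K G V) (u : AFormula K X Y)
    (h : ∀ H : Subgroup G, H.FG → HoldsA (ρ.comp H.subtype) u) :
    HoldsA ρ u := by
  intro α β
  classical
  set S : Finset Y := aVars u with hS
  set β' : Y → G := fun y => if y ∈ S then β y else 1 with hβ'
  set H : Subgroup G := Subgroup.closure ↑(S.image β') with hH
  have hfg : H.FG := ⟨S.image β', rfl⟩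
  have hmem : ∀ y, β' y ∈ H := by
    intro y
    by_cases hy : y ∈ S
    · exact Subgroup.subset_closure (by
        simp only [Finset.coe_image, Set.mem_image, Finset.mem_coe]
        exact ⟨y, hy, rfl⟩)
    · simp only [hβ', hy, if_neg, if_false]
      exact H.one_mem
  set βH : Y → H := fun y => ⟨β' y, hmem y⟩ with hβH
  have hsat : SatA (ρ.comp H.subtype) α βH u := h H hfg α βH
  have hlift : H.subtype.comp (FreeGroup.lift βH) = FreeGroup.lift β' := by
    ext y
    simp [hβH]
  have hcomp : (ρ.comp H.subtype).comp (FreeGroup.lift βH) = ρ.comp (FreeGroup.lift β') := by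
    rw [MonoidHom.comp_assoc, hlift]
  have hsat' : SatA ρ α β' u :=
    (satA_congr_rep (ρ.comp H.subtype) ρ βH β' hcomp u α).mp hsat
  refine (satA_congr_on ρ u (fun y hy => ?_) α).mpr hsat'
  simp only [hβ', if_pos (show y ∈ S from hy)]
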